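/- Let d ≥ 1, let σ be a permutation of {1,…,d}, let O be a d×d real orthogonal matrix, set m = d(d−1)/2, and let ε_1,…,ε_m ∈ {1,−1} with ε_1 ⋯ ε_m = det(O). Then there exist real orthogonal matrices A_1,…,A_m with O = A_1 ⋯ A_m such that each A_i agrees with the d×d identity matrix in every entry outside the 2×2 principal submatrix with row and column indices σ(k_i) and σ(k_i + 1) for some k_i ∈ {1,…,d−1}, and det(A_i) = ε_i for every i. In particular, if det(O) = 1, then O is a product of at most d(d−1)/2 two-level special orthogonal P-matrices. -/

import Mathlib

/-- `A` agrees with the identity matrix in every entry outside the 2×2 principal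
submatrix with row and column indices `p` and `q` (a "two-level" pattern). -/
def IsTwoLevelOn {ι R : Type*} [DecidableEq ι] [Zero R] [One R]
    (A : Matrix ι ι R) (p q : ι) : Prop :=
  ∀ i j, (i ≠ p ∧ i ≠ q) ∨ (j ≠ p ∧ j ≠ q) → A i j = if i = j then 1 else 0

namespace TL

open Matrix

variable {d : ℕ}

def twoLevel (p q : Fin d) (a b c e : ℝ) : Matrix (Fin d) (Fin d) ℝ :=
  Matrix.of fun i j =>
    if i = p then (if j = p then a else if j = q then b else 0)
    else if i = q then (if j = p then c else if j = q then e else 0)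
    else if i = j then 1 else 0

lemma sum_pair_eq {p q : Fin d} (hpq : p ≠ q) (f : Fin d → ℝ)
    (h : ∀ j, j ≠ p → j ≠ q → f j = 0) : ∑ j, f j = f p + f q := by
  have hsub : ({p, q} : Finset (Fin d)) ⊆ Finset.univ := Finset.subset_univ _
  rw [← Finset.sum_subset hsub (fun x _ hx => by
    simp only [Finset.mem_insert, Finset.mem_singleton] at hx
    push_neg at hx
    exact h x hx.1 hx.2)]
  exact Finset.sum_pair hpq

lemma isTwoLevelOn_twoLevel (p q : Fin d) (a b c e : ℝ) :
    IsTwoLevelOn (twoLevel p q a b c e) p q := by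
  intro i j h
  simp only [twoLevel, Matrix.of_apply]
  rcases h with ⟨h1, h2⟩ | ⟨h1, h2⟩ <;> split_ifs <;> simp_all

lemma twoLevel_transpose (p q : Fin d) (hpq : p ≠ q) (a b c e : ℝ) :
    (twoLevel p q a b c e)ᵀ = twoLevel p q a c b e := by
  ext i j
  simp only [Matrix.transpose_apply, twoLevel, Matrix.of_apply]
  split_ifs <;> grind

lemma twoLevel_mul (p q : Fin d) (hpq : p ≠ q) (a b c e a' b' c' e' : ℝ) :
    twoLevel p q a b c e * twoLevel p q a' b' c' e' =
      twoLevel p q (a*a'+b*c') (a*b'+b*e') (c*a'+e*c') (c*b'+e*e') := by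
  ext i j
  rw [Matrix.mul_apply]
  by_cases hip : i = p
  · rw [sum_pair_eq hpq _ (fun k hk1 hk2 => by simp [twoLevel, hip, hk1, hk2])]
    simp only [twoLevel, Matrix.of_apply, hip, if_pos, if_true, hpq, hpq.symm, if_neg, if_false]
    split_ifs <;> simp_all <;> ring
  · by_cases hiq : i = q
    · rw [sum_pair_eq hpq _ (fun k hk1 hk2 => by simp [twoLevel, hip, hiq, hk1, hk2])]
      simp only [twoLevel, Matrix.of_apply, hip, hiq, if_pos, if_true, hpq, hpq.symm, if_neg,
        if_false]
      split_ifs <;> simp_all <;> ring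
    · have key : ∀ k, twoLevel p q a b c e i k * twoLevel p q a' b' c' e' k j
          = if k = i then twoLevel p q a' b' c' e' i j else 0 := by
        intro k
        by_cases hk : k = i
        · subst hk; simp [twoLevel, hip, hiq]
        · simp only [twoLevel, Matrix.of_apply, hip, hiq, if_neg, if_false]
          split_ifs <;> simp_all [eq_comm]
      simp only [key, Finset.sum_ite_eq' Finset.univ i, Finset.mem_univ, if_true]
      simp [twoLevel, hip, hiq]

lemma twoLevel_one (p q : Fin d) (hpq : p ≠ q) : twoLevel p q 1 0 0 1 = 1 := by
  ext i j
  simp only [twoLevel, Matrix.of_apply, Matrix.one_apply]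
  split_ifs <;> simp_all

lemma twoLevel_orth (p q : Fin d) (hpq : p ≠ q) {a b c e : ℝ}
    (h1 : a*a + c*c = 1) (h2 : b*b + e*e = 1) (h3 : a*b + c*e = 0) :
    (twoLevel p q a b c e)ᵀ * twoLevel p q a b c e = 1 := by
  rw [twoLevel_transpose p q hpq, twoLevel_mul p q hpq]
  rw [show a*a+c*c = 1 from h1, show a*b+c*e = 0 from h3,
    show b*a+e*c = (0:ℝ) by rw [← h3]; ring, show b*b+e*e = 1 from h2]
  exact twoLevel_one p q hpq


abbrev I : Matrix (Fin d) (Fin d) ℝ := 1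

lemma updateRow_comm (M : Matrix (Fin d) (Fin d) ℝ) {p q : Fin d} (hpq : p ≠ q)
    (u w : Fin d → ℝ) :
    (M.updateRow p u).updateRow q w = (M.updateRow q w).updateRow p u := by
  ext i j
  by_cases hip : i = p <;> by_cases hiq : i = q <;>
    simp_all [Matrix.updateRow_apply]

lemma det_twoLevel (p q : Fin d) (hpq : p ≠ q) (a b c e : ℝ) :
    (twoLevel p q a b c e).det = a * e - b * c := by
  have hI : (I : Matrix (Fin d) (Fin d) ℝ) = 1 := rfl
  have hrepr : twoLevel p q a b c e =
      (I.updateRow p (a • I p + b • I q)).updateRow q (c • I p + e • I q) := by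
    ext i j
    simp only [twoLevel, Matrix.of_apply, Matrix.updateRow_apply, Pi.add_apply,
      Pi.smul_apply, smul_eq_mul, hI, Matrix.one_apply]
    by_cases hip : i = p <;> by_cases hiq : i = q <;> split_ifs <;>
      first | grind | (try simp_all) <;> (try grind) <;> ring
  have hswap : (I.updateRow q (I p)).updateRow p (I q)
      = I.submatrix (Equiv.swap p q) id := by
    ext i j
    by_cases hip : i = p <;> by_cases hiq : i = q <;>
      simp_all [Matrix.updateRow_apply, Matrix.submatrix_apply, Equiv.swap_apply_def,
        Matrix.one_apply]
  have hswapdet : ((I.updateRow q (I p)).updateRow p (I q)).det = -1 := by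
    rw [hswap, hI, Matrix.det_permute, Equiv.Perm.sign_swap hpq]
    simp
  have h0a : ((I.updateRow q (I p)).updateRow p (I p)).det = 0 := by
    apply Matrix.det_zero_of_row_eq hpq
    simp [Matrix.updateRow_apply, hpq.symm]
  have h0b : ((I.updateRow q (I q)).updateRow p (I q)).det = 0 := by
    apply Matrix.det_zero_of_row_eq hpq
    simp [Matrix.updateRow_apply, hpq.symm]
  have h1 : ((I.updateRow q (I q)).updateRow p (I p)).det = 1 := by
    rw [Matrix.updateRow_eq_self, Matrix.updateRow_eq_self, hI, Matrix.det_one]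
  rw [hrepr, Matrix.det_updateRow_add, Matrix.det_updateRow_smul, Matrix.det_updateRow_smul,
    updateRow_comm _ hpq, updateRow_comm _ hpq,
    Matrix.det_updateRow_add, Matrix.det_updateRow_smul, Matrix.det_updateRow_smul,
    Matrix.det_updateRow_add, Matrix.det_updateRow_smul, Matrix.det_updateRow_smul,
    hswapdet, h0a, h0b, h1]
  ring

lemma twoLevel_mulVec_fst {p q : Fin d} (hpq : p ≠ q) (a b c e : ℝ) (v : Fin d → ℝ) :
    (twoLevel p q a b c e *ᵥ v) p = a * v p + b * v q := by
  show ∑ j, twoLevel p q a b c e p j * v j = _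
  rw [sum_pair_eq hpq _ (fun k hk1 hk2 => by simp [twoLevel, hk1, hk2])]
  simp [twoLevel, hpq, hpq.symm]

lemma twoLevel_mulVec_snd {p q : Fin d} (hpq : p ≠ q) (a b c e : ℝ) (v : Fin d → ℝ) :
    (twoLevel p q a b c e *ᵥ v) q = c * v p + e * v q := by
  show ∑ j, twoLevel p q a b c e q j * v j = _
  rw [sum_pair_eq hpq _ (fun k hk1 hk2 => by simp [twoLevel, hpq.symm, hk1, hk2])]
  simp [twoLevel, hpq, hpq.symm]

lemma twoLevel_mulVec_other {p q i : Fin d} (hip : i ≠ p) (hiq : i ≠ q)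
    (a b c e : ℝ) (v : Fin d → ℝ) :
    (twoLevel p q a b c e *ᵥ v) i = v i := by
  show ∑ j, twoLevel p q a b c e i j * v j = _
  have : ∀ j, twoLevel p q a b c e i j * v j = if j = i then v i else 0 := by
    intro j
    by_cases hj : j = i
    · subst hj; simp [twoLevel, hip, hiq]
    · simp [twoLevel, hip, hiq, Ne.symm hj, hj]
  simp only [this, Finset.sum_ite_eq' Finset.univ i, Finset.mem_univ, if_true]

/-- embed a matrix as a block `1 ⊕ B`. -/
def emb (B : Matrix (Fin n) (Fin n) ℝ) : Matrix (Fin (n+1)) (Fin (n+1)) ℝ :=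
  Matrix.of (Fin.cons (Fin.cons 1 0) (fun i => Fin.cons 0 (B i)))

@[simp] lemma emb_zero_zero (B : Matrix (Fin n) (Fin n) ℝ) : emb B 0 0 = 1 := rfl
@[simp] lemma emb_zero_succ (B : Matrix (Fin n) (Fin n) ℝ) (j : Fin n) :
    emb B 0 j.succ = 0 := by simp [emb, Matrix.of_apply]
@[simp] lemma emb_succ_zero (B : Matrix (Fin n) (Fin n) ℝ) (i : Fin n) :
    emb B i.succ 0 = 0 := by simp [emb, Matrix.of_apply]
@[simp] lemma emb_succ_succ (B : Matrix (Fin n) (Fin n) ℝ) (i j : Fin n) :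
    emb B i.succ j.succ = B i j := by simp [emb, Matrix.of_apply]

lemma emb_one : emb (1 : Matrix (Fin n) (Fin n) ℝ) = 1 := by
  ext i j
  refine Fin.cases ?_ (fun i' => ?_) i <;> refine Fin.cases ?_ (fun j' => ?_) j <;>
    simp [Matrix.one_apply, Fin.succ_ne_zero, (Fin.succ_ne_zero _).symm, Fin.succ_inj]

lemma emb_mul (B C : Matrix (Fin n) (Fin n) ℝ) : emb (B * C) = emb B * emb C := by
  ext i j
  rw [Matrix.mul_apply]
  refine Fin.cases ?_ (fun i' => ?_) i <;> refine Fin.cases ?_ (fun j' => ?_) j <;>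
    rw [Fin.sum_univ_succ] <;> simp [Matrix.mul_apply]

lemma emb_transpose (B : Matrix (Fin n) (Fin n) ℝ) : (emb B)ᵀ = emb Bᵀ := by
  ext i j
  refine Fin.cases ?_ (fun i' => ?_) i <;> refine Fin.cases ?_ (fun j' => ?_) j <;>
    simp [Matrix.transpose_apply]

lemma emb_det (B : Matrix (Fin n) (Fin n) ℝ) : (emb B).det = B.det := by
  rw [Matrix.det_succ_column_zero, Fin.sum_univ_succ]
  have h1 : ((emb B).submatrix Fin.succ Fin.succ) = B := by
    ext i j
    simp [Matrix.submatrix_apply]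
  simp [Fin.succAbove_zero, h1]

lemma emb_prod (L : List (Matrix (Fin n) (Fin n) ℝ)) :
    (L.map emb).prod = emb L.prod := by
  induction L with
  | nil => simp [emb_one]
  | cons A L ih => simp [emb_mul, ih]

lemma emb_mulVec_zero (B : Matrix (Fin n) (Fin n) ℝ) (v : Fin (n+1) → ℝ) :
    (emb B *ᵥ v) 0 = v 0 := by
  show ∑ j, emb B 0 j * v j = _
  rw [Fin.sum_univ_succ]
  simp

lemma emb_mulVec_succ (B : Matrix (Fin n) (Fin n) ℝ) (v : Fin (n+1) → ℝ) (i : Fin n) :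
    (emb B *ᵥ v) i.succ = (B *ᵥ (v ∘ Fin.succ)) i := by
  show ∑ j, emb B i.succ j * v j = _
  rw [Fin.sum_univ_succ]
  simp [Matrix.mulVec, dotProduct]

lemma emb_isTwoLevelOn {B : Matrix (Fin n) (Fin n) ℝ} {p q : Fin n}
    (h : IsTwoLevelOn B p q) : IsTwoLevelOn (emb B) p.succ q.succ := by
  intro i j
  refine Fin.cases ?_ (fun i' => ?_) i <;> refine Fin.cases ?_ (fun j' => ?_) j <;> intro h'
  · simp
  · simp [(Fin.succ_ne_zero j').symm]
  · simp [Fin.succ_ne_zero i']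
  · have hc : (i' ≠ p ∧ i' ≠ q) ∨ (j' ≠ p ∧ j' ≠ q) := by
      rcases h' with ⟨h1, h2⟩ | ⟨h1, h2⟩
      · exact Or.inl ⟨fun hh => h1 (by rw [hh]), fun hh => h2 (by rw [hh])⟩
      · exact Or.inr ⟨fun hh => h1 (by rw [hh]), fun hh => h2 (by rw [hh])⟩
    rw [emb_succ_succ, h i' j' hc]
    simp [Fin.succ_inj]

lemma prod_orth (L : List (Matrix (Fin d) (Fin d) ℝ))
    (h : ∀ A ∈ L, Aᵀ * A = 1) : L.prodᵀ * L.prod = 1 := by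
  induction L with
  | nil => simp
  | cons A L ih =>
    have hA : Aᵀ * A = 1 := h A List.mem_cons_self
    have hL := ih (fun B hB => h B (List.mem_cons_of_mem _ hB))
    simp only [List.prod_cons, Matrix.transpose_mul]
    calc L.prodᵀ * Aᵀ * (A * L.prod) = L.prodᵀ * (Aᵀ * A) * L.prod := by
          rw [Matrix.mul_assoc, Matrix.mul_assoc, Matrix.mul_assoc]
      _ = 1 := by rw [hA, Matrix.mul_one, hL]



lemma givens_exists (x y δ : ℝ) (hδ : δ = 1 ∨ δ = -1) :
    ∃ a b c e : ℝ, a*a + c*c = 1 ∧ b*b + e*e = 1 ∧ a*b + c*e = 0 ∧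
      a*e - b*c = δ ∧ a*x + b*y = Real.sqrt (x^2 + y^2) ∧ c*x + e*y = 0 := by
  have hδ2 : δ * δ = 1 := by rcases hδ with h | h <;> rw [h] <;> norm_num
  by_cases h0 : x = 0 ∧ y = 0
  · refine ⟨1, 0, 0, δ, by norm_num, by simpa using hδ2, by norm_num, by norm_num, ?_, ?_⟩
    · rw [h0.1, h0.2]; norm_num
    · rw [h0.1, h0.2]; ring
  · have hpos : 0 < x^2 + y^2 := by
      rcases not_and_or.mp h0 with h | h
      · have : 0 < x^2 := by positivity
        nlinarith [sq_nonneg y]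
      · have : 0 < y^2 := by positivity
        nlinarith [sq_nonneg x]
    set r := Real.sqrt (x^2 + y^2) with hr
    have hrpos : 0 < r := Real.sqrt_pos.mpr hpos
    have hr2 : r^2 = x^2 + y^2 := Real.sq_sqrt hpos.le
    refine ⟨x/r, y/r, -δ*y/r, δ*x/r, ?_, ?_, ?_, ?_, ?_, ?_⟩ <;> field_simp <;>
      first
        | linear_combination (-(x*y)) * hδ2
        | linear_combination (-δ) * hr2
        | nlinarith [hr2, hδ2, hrpos]

lemma reduce : ∀ (n : ℕ) (v : Fin (n+2) → ℝ) (δ : List ℝ) (hlen : δ.length = n+1)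
    (hδ : ∀ x ∈ δ, x = 1 ∨ x = -1),
    ∃ G : List (Matrix (Fin (n+2)) (Fin (n+2)) ℝ), ∃ hGlen : G.length = n+1,
      (∀ i (h1 : i < n+1),
        (((G[i]'(by omega))ᵀ * (G[i]'(by omega)) = 1) ∧
        (∃ (k : ℕ) (hk : k+1 < n+2), IsTwoLevelOn (G[i]'(by omega)) ⟨k, by omega⟩ ⟨k+1, hk⟩) ∧
        (G[i]'(by omega)).det = δ[i]'(by omega))) ∧
      G.prod *ᵥ v = Real.sqrt (∑ j, (v j)^2) • (Pi.single (0 : Fin (n+2)) 1 : Fin (n+2) → ℝ) := by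
  intro n
  induction n with
  | zero =>
    intro v δ hlen hδ
    have hd0 : δ[0]'(by omega) ∈ δ := List.getElem_mem _
    obtain ⟨a, b, c, e, h1, h2, h3, h4, h5, h6⟩ :=
      givens_exists (v 0) (v 1) (δ[0]'(by omega)) (hδ _ hd0)
    have hpq : (0 : Fin 2) ≠ 1 := by decide
    refine ⟨[twoLevel 0 1 a b c e], by simp, ?_, ?_⟩
    · intro i hi
      have hi0 : i = 0 := by omega
      subst hi0
      refine ⟨twoLevel_orth 0 1 hpq h1 h2 h3, ⟨0, by omega, ?_⟩, ?_⟩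
      · exact isTwoLevelOn_twoLevel 0 1 a b c e
      · simpa [det_twoLevel 0 1 hpq]
    · ext i
      fin_cases i
      · simpa [twoLevel_mulVec_fst hpq, Fin.sum_univ_two] using h5
      · simpa [twoLevel_mulVec_snd hpq, Pi.single_apply] using h6
  | succ n ih =>
    intro v δ hlen hδ
    obtain ⟨d0, δ', rfl⟩ : ∃ d0 δ', δ = d0 :: δ' := by
      cases δ with
      | nil => simp at hlen
      | cons a t => exact ⟨a, t, rfl⟩
    have hlen' : δ'.length = n + 1 := by simpa using hlen
    obtain ⟨G', hG'len, hG'props, hG'act⟩ :=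
      ih (v ∘ Fin.succ) δ' hlen' (fun x hx => hδ x (List.mem_cons_of_mem _ hx))
    set s : ℝ := Real.sqrt (∑ j, ((v ∘ Fin.succ) j)^2) with hs
    have hsnn : 0 ≤ s := Real.sqrt_nonneg _
    have hs2 : s^2 = ∑ j, ((v ∘ Fin.succ) j)^2 :=
      Real.sq_sqrt (Finset.sum_nonneg fun j _ => sq_nonneg _)
    obtain ⟨a, b, c, e, h1, h2, h3, h4, h5, h6⟩ :=
      givens_exists (v 0) s d0 (hδ d0 List.mem_cons_self)
    have hpq : (0 : Fin (n+3)) ≠ 1 := by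
      simp [Fin.ext_iff]
    set T : Matrix (Fin (n+3)) (Fin (n+3)) ℝ := twoLevel 0 1 a b c e with hT
    refine ⟨T :: G'.map emb, by simp [hG'len], ?_, ?_⟩
    · intro i hi
      match i with
      | 0 =>
        simp only [List.getElem_cons_zero]
        refine ⟨twoLevel_orth 0 1 hpq h1 h2 h3, ⟨0, by omega, ?_⟩, ?_⟩
        · have e1 : (⟨0+1, by omega⟩ : Fin (n+3)) = 1 := by simp [Fin.ext_iff]
          have e0 : (⟨0, by omega⟩ : Fin (n+3)) = 0 := rfl
          rw [e0, e1, hT]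
          exact isTwoLevelOn_twoLevel 0 1 a b c e
        · simpa [hT, det_twoLevel 0 1 hpq]
      | (i' + 1) =>
        have hi'' : i' < n + 1 := by omega
        have hi' : i' < G'.length := by omega
        obtain ⟨ho, ⟨k, hk, htl⟩, hdet⟩ := hG'props i' hi''
        simp only [List.getElem_cons_succ, List.getElem_map]
        refine ⟨?_, ⟨k+1, by omega, ?_⟩, ?_⟩
        · rw [emb_transpose, ← emb_mul, ho, emb_one]
        · have := emb_isTwoLevelOn htl
          have ek : (⟨k, by omega⟩ : Fin (n+2)).succ = (⟨k+1, by omega⟩ : Fin (n+3)) := rfl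
          have ek1 : (⟨k+1, hk⟩ : Fin (n+2)).succ = (⟨k+1+1, by omega⟩ : Fin (n+3)) := rfl
          rw [ek, ek1] at this
          exact this
        · rw [emb_det, hdet]
    · have hprod : (T :: G'.map emb).prod = T * emb G'.prod := by
        simp [emb_prod]
      rw [hprod, ← Matrix.mulVec_mulVec]
      set w : Fin (n+3) → ℝ := emb G'.prod *ᵥ v with hw
      have hw0 : w 0 = v 0 := emb_mulVec_zero _ _
      have hwsucc : ∀ i : Fin (n+2), w i.succ = if i = 0 then s else 0 := by
        intro i
        rw [hw, emb_mulVec_succ, hG'act]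
        simp [Pi.single_apply, hs]
      have hw1 : w 1 = s := by
        have : (1 : Fin (n+3)) = (0 : Fin (n+2)).succ := rfl
        rw [this, hwsucc]
        simp
      have hsum : Real.sqrt (∑ j, (v j)^2) = Real.sqrt ((v 0)^2 + s^2) := by
        rw [hs2, Fin.sum_univ_succ]
        simp [Function.comp]
      ext i
      refine Fin.cases ?_ (fun i1 => ?_) i
      · rw [twoLevel_mulVec_fst hpq, hw0, hw1, h5, hsum]
        simp [Pi.single_apply]
      · refine Fin.cases ?_ (fun i2 => ?_) i1
        · have e1 : ((0 : Fin (n+2)).succ) = (1 : Fin (n+3)) := rfl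
          rw [e1, twoLevel_mulVec_snd hpq, hw0, hw1, h6]
          simp [Pi.single_apply]
        · have hne0 : i2.succ.succ ≠ (0 : Fin (n+3)) := Fin.succ_ne_zero _
          have hne1 : i2.succ.succ ≠ (1 : Fin (n+3)) := by
            intro hcon
            have : i2.succ = 0 := by
              apply Fin.succ_injective
              rw [hcon]
              rfl
            exact Fin.succ_ne_zero _ this
          rw [twoLevel_mulVec_other hne0 hne1, hwsucc]
          simp [Pi.single_apply, Fin.succ_ne_zero]

lemma prod_pm : ∀ (L : List ℝ), (∀ x ∈ L, x = 1 ∨ x = -1) → L.prod = 1 ∨ L.prod = -1 := by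
  intro L
  induction L with
  | nil => intro _; left; simp
  | cons a t ih =>
    intro h
    have ha := h a List.mem_cons_self
    have ht := ih (fun x hx => h x (List.mem_cons_of_mem _ hx))
    rw [List.prod_cons]
    rcases ha with ha | ha <;> rcases ht with ht | ht <;> rw [ha, ht] <;> norm_num

lemma isTwoLevelOn_transpose {A : Matrix (Fin d) (Fin d) ℝ} {p q : Fin d}
    (h : IsTwoLevelOn A p q) : IsTwoLevelOn Aᵀ p q := by
  intro i j hij
  rw [Matrix.transpose_apply, h j i (hij.symm.imp id id)]
  simp [eq_comm]

lemma getElem_eq_of_idx {α : Type*} {l : List α} {i j : ℕ} (hij : i = j) {hi : i < l.length} :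
    l[i]'hi = l[j]'(hij ▸ hi) := by subst hij; rfl

lemma main : ∀ (n : ℕ) (O : Matrix (Fin (n+1)) (Fin (n+1)) ℝ) (hO : Oᵀ * O = 1)
    (ε : List ℝ) (hε : ∀ x ∈ ε, x = 1 ∨ x = -1) (hlen : ε.length = (n+1)*n/2)
    (hprod : ε.prod = O.det),
    ∃ L : List (Matrix (Fin (n+1)) (Fin (n+1)) ℝ), ∃ hL : L.length = ε.length,
      O = L.prod ∧
      ∀ i (hi : i < L.length),
        ((L[i]'hi)ᵀ * (L[i]'hi) = 1) ∧
        (∃ (k : ℕ) (hk : k+1 < n+1), IsTwoLevelOn (L[i]'hi) ⟨k, by omega⟩ ⟨k+1, hk⟩) ∧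
        (L[i]'hi).det = ε[i]'(by omega) := by
  intro n
  induction n with
  | zero =>
    intro O hO ε hε hlen hprod
    have hε0 : ε = [] := List.eq_nil_of_length_eq_zero (by simpa using hlen)
    subst hε0
    have hdet : O.det = 1 := by rw [← hprod]; simp
    have hO1 : O = 1 := by
      ext i j
      have hi : i = 0 := Fin.ext (by omega)
      have hj : j = 0 := Fin.ext (by omega)
      subst hi; subst hj
      rw [show O 0 0 = O.det from (Matrix.det_fin_one O).symm, hdet]
      simp
    exact ⟨[], by simp, by simpa using hO1, fun i hi => absurd hi (by simp)⟩
  | succ n ih =>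
    intro O hO ε hε hlen hprod
    have hac : (n+1+1)*(n+1) = (n+2)*(n+1) := by ring
    have harith : (n+2)*(n+1)/2 = (n+1) + (n+1)*n/2 := by
      have e1 : (n+2)*(n+1) = (n+1)*n + (n+1)*2 := by ring
      rw [e1, Nat.add_mul_div_right _ _ (by norm_num : 0 < 2)]
      omega
    have hlen2 : ε.length = (n+2)*(n+1)/2 := by
      rw [hlen]
      try omega
    have hl1 : (ε.take (n+1)).length = n+1 := by
      rw [List.length_take]
      omega
    have hl2 : (ε.drop (n+1)).length = (n+1)*n/2 := by
      rw [List.length_drop]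
      omega
    set v : Fin (n+2) → ℝ := fun i => O i 0 with hv
    have hvsum : ∑ j, (v j)^2 = 1 := by
      have h00 : (Oᵀ * O) 0 0 = 1 := by rw [hO]; simp
      rw [Matrix.mul_apply] at h00
      simpa [hv, Matrix.transpose_apply, pow_two] using h00
    obtain ⟨G, hGlen, hGprops, hGact⟩ := reduce n v (ε.take (n+1)).reverse
      (by simp [hl1]) (fun x hx => hε x (List.take_subset _ _ (List.mem_reverse.mp hx)))
    rw [hvsum, Real.sqrt_one, one_smul] at hGact
    have hGorth : G.prodᵀ * G.prod = 1 := by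
      apply prod_orth
      intro A hA
      obtain ⟨i, hi, rfl⟩ := List.mem_iff_getElem.mp hA
      exact (hGprops i (by omega)).1
    set M : Matrix (Fin (n+2)) (Fin (n+2)) ℝ := G.prod * O with hM
    have hMorth : Mᵀ * M = 1 := by
      rw [hM, Matrix.transpose_mul]
      calc Oᵀ * G.prodᵀ * (G.prod * O) = Oᵀ * (G.prodᵀ * G.prod) * O := by
            rw [Matrix.mul_assoc, Matrix.mul_assoc, Matrix.mul_assoc]
        _ = 1 := by rw [hGorth, Matrix.mul_one, hO]
    have hcol : ∀ i, M i 0 = if i = 0 then 1 else 0 := by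
      intro i
      have : M i 0 = (G.prod *ᵥ v) i := by
        simp [hM, Matrix.mul_apply, Matrix.mulVec, dotProduct, hv]
      rw [this, hGact, Pi.single_apply]
    have hrow : ∀ j, M 0 j = if (0 : Fin (n+2)) = j then 1 else 0 := by
      intro j
      have h1 : (Mᵀ * M) 0 j = (1 : Matrix (Fin (n+2)) (Fin (n+2)) ℝ) 0 j := by rw [hMorth]
      rw [Matrix.mul_apply] at h1
      simp only [Matrix.transpose_apply] at h1
      have h2 : ∑ k, M k 0 * M k j = M 0 j := by
        have : ∀ k, M k 0 * M k j = if k = 0 then M 0 j else 0 := by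
          intro k
          rw [hcol k]
          by_cases hk : k = 0 <;> simp [hk]
        simp [this]
      rw [h2] at h1
      rw [h1, Matrix.one_apply]
    set O' : Matrix (Fin (n+1)) (Fin (n+1)) ℝ := M.submatrix Fin.succ Fin.succ with hO'
    have hMemb : M = emb O' := by
      ext i j
      refine Fin.cases ?_ (fun i1 => ?_) i <;> refine Fin.cases ?_ (fun j1 => ?_) j
      · rw [hrow 0]; simp
      · rw [hrow j1.succ]; simp [(Fin.succ_ne_zero j1).symm]
      · rw [hcol i1.succ]; simp [Fin.succ_ne_zero i1]
      · simp [hO', Matrix.submatrix_apply]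
    have hO'orth : O'ᵀ * O' = 1 := by
      ext i j
      rw [Matrix.mul_apply]
      have h1 : (Mᵀ * M) i.succ j.succ = (1 : Matrix (Fin (n+2)) (Fin (n+2)) ℝ) i.succ j.succ := by
        rw [hMorth]
      rw [Matrix.mul_apply, Fin.sum_univ_succ] at h1
      simp only [Matrix.transpose_apply] at h1
      rw [hrow i.succ, if_neg (Ne.symm (Fin.succ_ne_zero i)), zero_mul, zero_add] at h1
      rw [show ∑ k : Fin (n+1), O'ᵀ i k * O' k j = ∑ k : Fin (n+1), M k.succ i.succ * M k.succ j.succ from by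
        simp [hO', Matrix.transpose_apply, Matrix.submatrix_apply], h1]
      simp [Matrix.one_apply, Fin.succ_inj]
    have hGdet : G.prod.det = (ε.take (n+1)).prod := by
      have h1 : G.prod.det = (G.map Matrix.det).prod := map_list_prod (Matrix.detMonoidHom) G
      have h2 : G.map Matrix.det = (ε.take (n+1)).reverse := by
        apply List.ext_getElem
        · simp [hGlen, hl1]
        · intro a h1' h2'
          rw [List.getElem_map]
          exact (hGprops a (by simp [hGlen] at h1'; omega)).2.2
      rw [h1, h2, List.prod_reverse]
    have hMdet : O'.det = (ε.take (n+1)).prod * O.det := by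
      have : (emb O').det = O'.det := emb_det O'
      rw [← this, ← hMemb, hM, Matrix.det_mul, hGdet]
    have hsq : (ε.take (n+1)).prod * (ε.take (n+1)).prod = 1 := by
      rcases prod_pm (ε.take (n+1)) (fun x hx => hε x (List.take_subset _ _ hx)) with h | h <;>
        rw [h] <;> norm_num
    have hprod2 : (ε.drop (n+1)).prod = O'.det := by
      have hsplit : (ε.take (n+1)).prod * (ε.drop (n+1)).prod = O.det := by
        rw [← List.prod_append, List.take_append_drop, hprod]
      rw [hMdet, ← hsplit, ← mul_assoc, hsq, one_mul]
    obtain ⟨L', hL'len, hL'prod, hL'props⟩ :=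
      ih O' hO'orth (ε.drop (n+1)) (fun x hx => hε x (List.drop_subset _ _ hx)) hl2 hprod2
    refine ⟨G.reverse.map Matrix.transpose ++ L'.map emb, ?_, ?_, ?_⟩
    · rw [List.length_append, List.length_map, List.length_reverse, List.length_map, hGlen,
        hL'len, hl2, hlen]
      omega
    · have hrev : (G.reverse.map Matrix.transpose).prod = G.prodᵀ := by
        rw [List.map_reverse, ← Matrix.transpose_list_prod]
      rw [List.prod_append, hrev, emb_prod, ← hL'prod, ← hMemb, hM, ← Matrix.mul_assoc, hGorth,
        Matrix.one_mul]
    · intro i hi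
      have hlen1 : (G.reverse.map Matrix.transpose).length = n+1 := by simp [hGlen]
      by_cases hsplit : i < n+1
      · have e1 : (G.reverse.map Matrix.transpose ++ L'.map emb)[i]'hi
            = (G[n-i]'(by omega))ᵀ := by
          have h1 : i < (G.reverse.map Matrix.transpose).length := by rw [hlen1]; omega
          rw [List.getElem_append_left h1, List.getElem_map, List.getElem_reverse]
          exact congrArg Matrix.transpose (getElem_eq_of_idx (by omega))
        obtain ⟨horth, ⟨k, hk, htl⟩, hdet⟩ := hGprops (n-i) (by omega)
        rw [e1]
        refine ⟨?_, ⟨k, hk, isTwoLevelOn_transpose htl⟩, ?_⟩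
        · rw [Matrix.transpose_transpose]
          exact mul_eq_one_comm.mp horth
        · rw [Matrix.det_transpose, hdet, List.getElem_reverse, List.getElem_take]
          exact getElem_eq_of_idx (by omega)
      · obtain ⟨i', rfl⟩ : ∃ i', i = (n+1) + i' := ⟨i - (n+1), by omega⟩
        have htot : (G.reverse.map Matrix.transpose ++ L'.map emb).length = (n+1) + L'.length := by
          rw [List.length_append, hlen1, List.length_map]
        have hi'2 : i' < L'.length := by omega
        have e1 : (G.reverse.map Matrix.transpose ++ L'.map emb)[(n+1)+i']'hi
            = emb (L'[i']'hi'2) := by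
          have h1 : (G.reverse.map Matrix.transpose).length ≤ (n+1)+i' := by rw [hlen1]; omega
          rw [List.getElem_append_right h1, List.getElem_map]
          exact congrArg emb (getElem_eq_of_idx (by omega))
        obtain ⟨horth, ⟨k, hk, htl⟩, hdet⟩ := hL'props i' hi'2
        rw [e1]
        refine ⟨?_, ⟨k+1, by omega, ?_⟩, ?_⟩
        · rw [emb_transpose, ← emb_mul, horth, emb_one]
        · have := emb_isTwoLevelOn htl
          exact this
        · rw [emb_det, hdet]
          have : ε[(n+1)+i']'(by omega) = (ε.drop (n+1))[i']'(by omega) := by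
            rw [List.getElem_drop]
          rw [this]

lemma conj_prod (σ : Equiv.Perm (Fin d)) (L : List (Matrix (Fin d) (Fin d) ℝ)) :
    (L.map (fun B => B.submatrix ⇑σ.symm ⇑σ.symm)).prod = L.prod.submatrix ⇑σ.symm ⇑σ.symm := by
  induction L with
  | nil => simp [Matrix.submatrix_one_equiv σ.symm]
  | cons A t ih =>
    simp only [List.map_cons, List.prod_cons, ih]
    exact Matrix.submatrix_mul_equiv A t.prod _ σ.symm _

lemma conj_twoLevel (σ : Equiv.Perm (Fin d)) {B : Matrix (Fin d) (Fin d) ℝ} {p q : Fin d}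
    (h : IsTwoLevelOn B p q) : IsTwoLevelOn (B.submatrix ⇑σ.symm ⇑σ.symm) (σ p) (σ q) := by
  intro i j hij
  rw [Matrix.submatrix_apply]
  have hc : (σ.symm i ≠ p ∧ σ.symm i ≠ q) ∨ (σ.symm j ≠ p ∧ σ.symm j ≠ q) := by
    rcases hij with ⟨h1, h2⟩ | ⟨h1, h2⟩
    · exact Or.inl ⟨fun hh => h1 (by rw [← hh, Equiv.apply_symm_apply]),
        fun hh => h2 (by rw [← hh, Equiv.apply_symm_apply])⟩
    · exact Or.inr ⟨fun hh => h1 (by rw [← hh, Equiv.apply_symm_apply]),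
        fun hh => h2 (by rw [← hh, Equiv.apply_symm_apply])⟩
  rw [h _ _ hc]
  simp [EmbeddingLike.apply_eq_iff_eq]

end TL


/-- Every `d × d` real orthogonal matrix is a product of `m = d(d-1)/2` two-level
orthogonal `P`-matrices with any prescribed determinants `ε_i ∈ {1, -1}` whose
product equals `det O`. -/
theorem orthogonal_eq_prod_P_orthogonal_prescribed_det (d : ℕ) (hd : 1 ≤ d)
    (σ : Equiv.Perm (Fin d))
    (O : Matrix (Fin d) (Fin d) ℝ) (hO : O.transpose * O = 1)
    (ε : Fin (d * (d - 1) / 2) → ℝ) (hε : ∀ i, ε i = 1 ∨ ε i = -1)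
    (hprod : ∏ i, ε i = O.det) :
    ∃ A : Fin (d * (d - 1) / 2) → Matrix (Fin d) (Fin d) ℝ,
      O = (List.ofFn A).prod ∧
      ∀ i, (A i).transpose * A i = 1 ∧
        (∃ (k : ℕ) (hk : k + 1 < d),
          IsTwoLevelOn (A i) (σ ⟨k, by omega⟩) (σ ⟨k + 1, hk⟩)) ∧
        (A i).det = ε i := by
  open TL in
  obtain ⟨n, rfl⟩ : ∃ n, d = n + 1 := ⟨d - 1, by omega⟩
  set O₀ := O.submatrix ⇑σ ⇑σ with hO₀def
  have hO₀ : O₀.transpose * O₀ = 1 := by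
    rw [hO₀def, Matrix.transpose_submatrix, Matrix.submatrix_mul_equiv O.transpose O _ σ _, hO,
      Matrix.submatrix_one_equiv σ]
  have hdet₀ : O₀.det = O.det := Matrix.det_submatrix_equiv_self σ O
  have hmm : (n+1) * ((n+1) - 1) / 2 = (n+1) * n / 2 := by simp
  have hεlen : (List.ofFn ε).length = (n+1) * n / 2 := by
    rw [List.length_ofFn]
    exact hmm
  have hεmem : ∀ x ∈ List.ofFn ε, x = 1 ∨ x = -1 := by
    intro x hx
    obtain ⟨i, rfl⟩ := List.mem_ofFn.mp hx
    exact hε i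
  have hεprod : (List.ofFn ε).prod = O₀.det := by
    rw [List.prod_ofFn, hprod, hdet₀]
  obtain ⟨L, hL, hLprod, hLprops⟩ := TL.main n O₀ hO₀ (List.ofFn ε) hεmem hεlen hεprod
  have hLlen : L.length = (n+1) * ((n+1) - 1) / 2 := by rw [hL, List.length_ofFn]
  refine ⟨fun i => (L[i.val]'(by rw [hLlen]; exact i.isLt)).submatrix ⇑σ.symm ⇑σ.symm, ?_, ?_⟩
  · have hofn : List.ofFn (fun i : Fin ((n+1) * ((n+1) - 1) / 2) =>
        (L[i.val]'(by rw [hLlen]; exact i.isLt)).submatrix ⇑σ.symm ⇑σ.symm)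
        = L.map (fun B => B.submatrix ⇑σ.symm ⇑σ.symm) := by
      apply List.ext_getElem
      · simp [hLlen]
      · intro a h1 h2
        simp only [List.getElem_ofFn, List.getElem_map]
    rw [hofn, TL.conj_prod, ← hLprod, hO₀def, Matrix.submatrix_submatrix,
      Equiv.self_comp_symm, Matrix.submatrix_id_id]
  · intro i
    have hib : i.val < L.length := by rw [hLlen]; exact i.isLt
    obtain ⟨horth, ⟨k, hk, htl⟩, hdet⟩ := hLprops i.val hib
    refine ⟨?_, ⟨k, hk, ?_⟩, ?_⟩
    · rw [Matrix.transpose_submatrix, Matrix.submatrix_mul_equiv _ _ _ σ.symm _, horth,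
        Matrix.submatrix_one_equiv σ.symm]
    · exact TL.conj_twoLevel σ htl
    · rw [Matrix.det_submatrix_equiv_self σ.symm, hdet]
      simp [List.getElem_ofFn]
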